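/- Let π : S → B be a partial representation, J the ideal of B generated by {aπ(s) − aπ(t) : a ∈ B, s ≤ t}, π̃ : S → B/J the induced partial representation, A ⊆ B/J the subalgebra generated by ε̃_s = π̃(s)π̃(s*), and α^π̃ the associated partial action on A. Then the map φ_π̃ : A ⋊_{α^π̃} S → B/J sending Σ a_s δ_s to Σ a_s π̃(s) is a well-defined homomorphism of K-algebras. -/

import Mathlib

open Finsupp

noncomputable section

/-- The natural partial order on an inverse semigroup: `r ≤ t` iff `r = t r* r`. -/
def sle {S : Type*} [Mul S] [Star S] (r t : S) : Prop := r = t * (star r * r)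

/-- A partial action of a unital inverse semigroup `S` on an associative algebra `A`:
ideals `X s` and isomorphisms `act s : X (star s) → X s`. -/
structure PartialAction (S : Type*) [Monoid S] [StarMul S]
    (A : Type*) [NonUnitalRing A] where
  X : S → Set A
  zero_mem : ∀ s, (0 : A) ∈ X s
  add_mem : ∀ s {a b : A}, a ∈ X s → b ∈ X s → a + b ∈ X s
  neg_mem : ∀ s {a : A}, a ∈ X s → -a ∈ X s
  mul_mem_left : ∀ s (a : A) {b : A}, b ∈ X s → a * b ∈ X s
  mul_mem_right : ∀ s (a : A) {b : A}, b ∈ X s → b * a ∈ X s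
  act : S → A → A
  X_one : X 1 = Set.univ
  act_one : ∀ a : A, act 1 a = a
  act_add : ∀ s {a b : A}, a ∈ X (star s) → b ∈ X (star s) →
    act s (a + b) = act s a + act s b
  act_mul : ∀ s {a b : A}, a ∈ X (star s) → b ∈ X (star s) →
    act s (a * b) = act s a * act s b
  mem_act : ∀ s {a : A}, a ∈ X (star s) → act s a ∈ X s
  act_act : ∀ s {a : A}, a ∈ X (star s) → act (star s) (act s a) = a
  range_eq : ∀ s t, act s '' (X (star s) ∩ X t) = X s ∩ X (s * t)
  comp : ∀ s t {a : A}, a ∈ X (star t) → act t a ∈ X t ∩ X (star s) →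
    act s (act t a) = act (s * t) a

namespace PartialAction

variable {S : Type*} [Monoid S] [StarMul S] {A : Type*} [NonUnitalRing A]
variable (P : PartialAction S A)

theorem mul_term_mem (s t : S) {a b : A} (ha : a ∈ P.X s) (hb : b ∈ P.X t) :
    P.act s (P.act (star s) a * b) ∈ P.X (s * t) := by
  have h1 : a ∈ P.X (star (star s)) := by rwa [star_star]
  have h2 := P.mem_act (star s) h1
  have h3 : P.act (star s) a * b ∈ P.X (star s) ∩ P.X t :=
    ⟨P.mul_mem_right _ b h2, P.mul_mem_left t _ hb⟩
  have h4 := Set.mem_image_of_mem (P.act s) h3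
  rw [P.range_eq s t] at h4
  exact h4.2

theorem sum_mem {ι : Type*} (u : S) (tt : Finset ι) (F : ι → A)
    (h : ∀ i ∈ tt, F i ∈ P.X u) : (∑ i ∈ tt, F i) ∈ P.X u :=
  Finset.sum_induction F (· ∈ P.X u) (fun _ _ ha hb => P.add_mem u ha hb)
    (P.zero_mem u) h

/-- The algebra `L` of formal sums `Σ a_s δ_s` with `a_s ∈ X s`. -/
def L : Type _ := {f : S →₀ A // ∀ u, f u ∈ P.X u}

instance : Zero P.L := ⟨⟨0, fun u => by simpa using P.zero_mem u⟩⟩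

instance : Add P.L :=
  ⟨fun f g => ⟨f.1 + g.1, fun u => by
    rw [Finsupp.add_apply]; exact P.add_mem u (f.2 u) (g.2 u)⟩⟩

instance : Mul P.L :=
  ⟨fun f g =>
    ⟨f.1.sum fun s a => g.1.sum fun t b =>
        Finsupp.single (s * t) (P.act s (P.act (star s) a * b)), by
      intro u
      classical
      rw [Finsupp.sum_apply]
      refine P.sum_mem u _ _ fun s hs => ?_
      dsimp only
      rw [Finsupp.sum_apply]
      refine P.sum_mem u _ _ fun t ht => ?_
      dsimp only
      rw [Finsupp.single_apply]
      split_ifs with h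
      · exact h ▸ P.mul_term_mem s t (f.2 s) (g.2 t)
      · exact P.zero_mem u⟩⟩

/-- `a δ_r` as an element of `L`. -/
def del (r : S) (a : A) (h : a ∈ P.X r) : P.L :=
  ⟨Finsupp.single r a, fun u => by
    classical
    rw [Finsupp.single_apply]
    split_ifs with hh
    · exact hh ▸ h
    · exact P.zero_mem u⟩

/-- The relation generating the ideal `I`: `a δ_r ~ a δ_t` whenever `r ≤ t`, `a ∈ X r`. -/
def crel : P.L → P.L → Prop := fun x y =>
  ∃ (r t : S) (a : A) (h : a ∈ P.X r) (h' : a ∈ P.X t),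
    sle r t ∧ x = P.del r a h ∧ y = P.del t a h'

/-- The algebraic crossed product `A ⋊_α S = L / I`. -/
abbrev CP : Type _ := (ringConGen P.crel).Quotient

/-- The quotient map `L → A ⋊_α S`. -/
def toCP : P.L → P.CP := fun x => (x : P.CP)

/-- The partial representation `s ↦ 1_s δ_s`, given identities `one s` for the ideals. -/
def rep (one : S → A) (hmem : ∀ s, one s ∈ P.X s) : S → P.CP :=
  fun s => P.toCP (P.del s (one s) (hmem s))

end PartialAction

section RepLemmas

variable {S : Type*} [Monoid S] [StarMul S] {R : Type*} [Ring R] (ρ : S → R)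

theorem rep_lemC (h1 : ∀ s t : S, ρ (star s) * ρ s * ρ t = ρ (star s) * ρ (s * t))
    (x y : S) : ρ x * ρ (star x) * ρ y = ρ x * ρ (star x * y) := by
  have h := h1 (star x) y
  rwa [star_star] at h

theorem rep_sq (h1 : ∀ s t : S, ρ (star s) * ρ s * ρ t = ρ (star s) * ρ (s * t))
    (h3 : ∀ s : S, ρ s * ρ (star s) * ρ s = ρ s)
    (e : S) (he : star e = e) (hee : e * e = e) : ρ e * ρ e = ρ e := by
  have a := h1 e e
  rw [he, hee] at a
  have b := h3 e
  rw [he] at b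
  rw [a] at b
  exact b

theorem rep_idem_mul (h1 : ∀ s t : S, ρ (star s) * ρ s * ρ t = ρ (star s) * ρ (s * t))
    (h2 : ∀ s t : S, ρ s * ρ t * ρ (star t) = ρ (s * t) * ρ (star t))
    (h3 : ∀ s : S, ρ s * ρ (star s) * ρ s = ρ s)
    (e f : S) (he : star e = e) (hf : star f = f) (hee : e * e = e) (hff : f * f = f)
    (hef : e * f = f * e) : ρ e * ρ f = ρ (e * f) := by
  have hq : star (e * f) = e * f := by rw [star_mul, he, hf, ← hef]
  have hqq : (e * f) * (e * f) = e * f := by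
    rw [mul_assoc e f (e * f), ← mul_assoc f e f, ← hef, mul_assoc e f f, hff, ← mul_assoc, hee]
  have hef2 : e * (e * f) = e * f := by rw [← mul_assoc, hee]
  have step1 : ρ e * ρ f = ρ e * ρ (e * f) := by
    have c := rep_lemC ρ h1 e f
    rw [he, rep_sq ρ h1 h3 e he hee] at c
    exact c
  have d := h2 e (e * f)
  rw [hq, hef2] at d
  -- d : ρ e * ρ (e*f) * ρ (e*f) = ρ (e*f) * ρ (e*f)
  rw [mul_assoc, rep_sq ρ h1 h3 (e * f) hq hqq] at d
  rw [step1, d]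

theorem rep_absorb (h1 : ∀ s t : S, ρ (star s) * ρ s * ρ t = ρ (star s) * ρ (s * t))
    (hinv : ∀ s : S, s * star s * s = s) (a : S) :
    ρ a * ρ (star a) * ρ (a * star a) = ρ a * ρ (star a) := by
  have c := rep_lemC ρ h1 a (a * star a)
  rw [← mul_assoc] at c
  have h : star a * a * star a = star a := by
    have h' := hinv (star a); rwa [star_star] at h'
  rw [h] at c
  exact c

theorem rep_star_formula (h1 : ∀ s t : S, ρ (star s) * ρ s * ρ t = ρ (star s) * ρ (s * t))
    (h2 : ∀ s t : S, ρ s * ρ t * ρ (star t) = ρ (s * t) * ρ (star t))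
    (h3 : ∀ s : S, ρ s * ρ (star s) * ρ s = ρ s)
    (hinv : ∀ s : S, s * star s * s = s) (x y : S) :
    (ρ x * ρ (star x)) * (ρ y * ρ (star y)) =
      ρ (x * (star x * y)) * ρ (star (x * (star x * y))) * ρ x * ρ (star x) * ρ (y * star y) := by
  set v := star x * y with hv
  have hsv : star v = star y * x := by rw [hv, star_mul, star_star]
  have key : star (x * v) * x = star v := by
    rw [star_mul, hsv, mul_assoc (star y) x (star x), mul_assoc (star y) (x * star x) x, hinv x]
  calc (ρ x * ρ (star x)) * (ρ y * ρ (star y))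
      = ρ x * ρ (star x) * ρ y * ρ (star y) := by rw [← mul_assoc]
    _ = ρ x * ρ v * ρ (star y) := by rw [rep_lemC ρ h1 x y]
    _ = ρ x * (ρ v * ρ (star v) * ρ v) * ρ (star y) := by rw [h3 v]
    _ = ρ x * ρ v * ρ (star v) * ρ v * ρ (star y) := by simp only [mul_assoc]
    _ = ρ (x * v) * ρ (star v) * ρ v * ρ (star y) := by rw [h2 x v]
    _ = ρ (x * v) * (ρ (star v) * ρ v * ρ (star y)) := by simp only [mul_assoc]
    _ = ρ (x * v) * (ρ (star v) * ρ (v * star y)) := by rw [h1 v (star y)]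
    _ = ρ (x * v) * ρ (star (x * v) * x) * ρ (v * star y) := by rw [key, ← mul_assoc]
    _ = ρ (x * v) * ρ (star (x * v)) * ρ x * ρ (v * star y) := by
        rw [rep_lemC ρ h1 (x * v) x]
    _ = ρ (x * v) * ρ (star (x * v)) * ρ x * ρ (star x * (y * star y)) := by
        rw [hv, mul_assoc (star x) y (star y)]
    _ = ρ (x * v) * ρ (star (x * v)) * (ρ x * ρ (star x * (y * star y))) := by
        simp only [mul_assoc]
    _ = ρ (x * v) * ρ (star (x * v)) * (ρ x * ρ (star x) * ρ (y * star y)) := by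
        rw [← rep_lemC ρ h1 x (y * star y)]
    _ = ρ (x * v) * ρ (star (x * v)) * ρ x * ρ (star x) * ρ (y * star y) := by
        simp only [mul_assoc]


section comm
variable (h1 : ∀ s t : S, ρ (star s) * ρ s * ρ t = ρ (star s) * ρ (s * t))
  (h2 : ∀ s t : S, ρ s * ρ t * ρ (star t) = ρ (s * t) * ρ (star t))
  (h3 : ∀ s : S, ρ s * ρ (star s) * ρ s = ρ s)
  (hinv : ∀ s : S, s * star s * s = s)
  (hcomm : ∀ s t : S, (s * star s) * (t * star t) = (t * star t) * (s * star s))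

theorem s_he (s : S) : star (s * star s) = s * star s := by rw [star_mul, star_star]

include hinv in
theorem s_hee (s : S) : (s * star s) * (s * star s) = s * star s := by
  have h := hinv (star s)
  rw [star_star] at h
  rw [mul_assoc, ← mul_assoc (star s) s (star s), h]

theorem s_hsa (s t : S) : star (s * (star s * t)) = star t * (s * star s) := by
  rw [star_mul, star_mul, star_star, mul_assoc]

include hinv hcomm in
theorem s_hp (s t : S) :
    (s * (star s * t)) * star (s * (star s * t)) = (s * star s) * (t * star t) := by
  rw [s_hsa]
  calc (s * (star s * t)) * (star t * (s * star s))
      = (s * star s) * (t * (star t * (s * star s))) := by simp only [mul_assoc]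
    _ = (s * star s) * ((t * star t) * (s * star s)) := by
        rw [← mul_assoc t (star t) (s * star s)]
    _ = (s * star s) * ((s * star s) * (t * star t)) := by rw [← hcomm s t]
    _ = ((s * star s) * (s * star s)) * (t * star t) := by rw [← mul_assoc]
    _ = (s * star s) * (t * star t) := by rw [s_hee hinv]

include hinv hcomm in
theorem s_ha2 (s t : S) :
    (s * (star s * t)) * (star (s * (star s * t)) * s) = t * (star t * s) := by
  calc (s * (star s * t)) * (star (s * (star s * t)) * s)
      = ((s * (star s * t)) * star (s * (star s * t))) * s := by rw [← mul_assoc]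
    _ = ((s * star s) * (t * star t)) * s := by rw [s_hp hinv hcomm]
    _ = ((t * star t) * (s * star s)) * s := by rw [hcomm s t]
    _ = (t * star t) * ((s * star s) * s) := by rw [mul_assoc]
    _ = (t * star t) * s := by rw [hinv s]
    _ = t * (star t * s) := by rw [mul_assoc]

include hinv hcomm in
theorem s_ha3 (s t : S) :
    (s * (star s * t)) * (star (s * (star s * t)) * (t * (star t * s))) = t * (star t * s) := by
  calc (s * (star s * t)) * (star (s * (star s * t)) * (t * (star t * s)))
      = ((s * (star s * t)) * star (s * (star s * t))) * (t * (star t * s)) := by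
        rw [← mul_assoc]
    _ = ((s * star s) * (t * star t)) * (t * (star t * s)) := by rw [s_hp hinv hcomm]
    _ = (s * star s) * (((t * star t) * t) * (star t * s)) := by simp only [mul_assoc]
    _ = (s * star s) * (t * (star t * s)) := by rw [hinv t]
    _ = ((s * star s) * (t * star t)) * s := by simp only [mul_assoc]
    _ = ((t * star t) * (s * star s)) * s := by rw [hcomm s t]
    _ = (t * star t) * ((s * star s) * s) := by rw [mul_assoc]
    _ = (t * star t) * s := by rw [hinv s]
    _ = t * (star t * s) := by rw [mul_assoc]

include h1 h2 h3 hinv hcomm in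
theorem rep_epsab_comm (s t : S) :
    (ρ (s * (star s * t)) * ρ (star (s * (star s * t)))) *
        (ρ (t * (star t * s)) * ρ (star (t * (star t * s)))) =
      (ρ (t * (star t * s)) * ρ (star (t * (star t * s)))) *
        (ρ (s * (star s * t)) * ρ (star (s * (star s * t)))) := by
  have habs := rep_absorb ρ h1 hinv (s * (star s * t))
  rw [s_hp hinv hcomm] at habs
  calc (ρ (s * (star s * t)) * ρ (star (s * (star s * t)))) *
        (ρ (t * (star t * s)) * ρ (star (t * (star t * s))))
      = ρ ((s * (star s * t)) * (star (s * (star s * t)) * (t * (star t * s)))) *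
          ρ (star ((s * (star s * t)) * (star (s * (star s * t)) * (t * (star t * s))))) *
          ρ (s * (star s * t)) * ρ (star (s * (star s * t))) *
          ρ ((t * (star t * s)) * star (t * (star t * s))) :=
        rep_star_formula ρ h1 h2 h3 hinv _ _
    _ = ρ (t * (star t * s)) * ρ (star (t * (star t * s))) *
          ρ (s * (star s * t)) * ρ (star (s * (star s * t))) *
          ρ ((t * star t) * (s * star s)) := by rw [s_ha3 hinv hcomm, s_hp hinv hcomm]
    _ = ρ (t * (star t * s)) * ρ (star (t * (star t * s))) *
          ρ (s * (star s * t)) * ρ (star (s * (star s * t))) *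
          ρ ((s * star s) * (t * star t)) := by rw [hcomm t s]
    _ = (ρ (t * (star t * s)) * ρ (star (t * (star t * s)))) *
          (ρ (s * (star s * t)) * ρ (star (s * (star s * t))) *
            ρ ((s * star s) * (t * star t))) := by simp only [mul_assoc]
    _ = (ρ (t * (star t * s)) * ρ (star (t * (star t * s)))) *
          (ρ (s * (star s * t)) * ρ (star (s * (star s * t)))) := by rw [habs]

include h1 h2 h3 hinv hcomm in
theorem rep_comm_aux (s t : S) :
    (ρ s * ρ (star s)) * (ρ t * ρ (star t)) =
      ρ (t * (star t * s)) * ρ (star (t * (star t * s))) *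
        ρ (s * (star s * t)) * ρ (star (s * (star s * t))) *
        ρ (s * star s) * ρ (t * star t) := by
  calc (ρ s * ρ (star s)) * (ρ t * ρ (star t))
      = ρ (s * (star s * t)) * ρ (star (s * (star s * t))) * ρ s * ρ (star s) *
          ρ (t * star t) := rep_star_formula ρ h1 h2 h3 hinv s t
    _ = (ρ (s * (star s * t)) * ρ (star (s * (star s * t)))) * (ρ s * ρ (star s)) *
          ρ (t * star t) := by simp only [mul_assoc]
    _ = ρ ((s * (star s * t)) * (star (s * (star s * t)) * s)) *
          ρ (star ((s * (star s * t)) * (star (s * (star s * t)) * s))) *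
          ρ (s * (star s * t)) * ρ (star (s * (star s * t))) * ρ (s * star s) *
          ρ (t * star t) := by rw [rep_star_formula ρ h1 h2 h3 hinv (s * (star s * t)) s]
    _ = ρ (t * (star t * s)) * ρ (star (t * (star t * s))) *
          ρ (s * (star s * t)) * ρ (star (s * (star s * t))) *
          ρ (s * star s) * ρ (t * star t) := by rw [s_ha2 hinv hcomm]

include h1 h2 h3 hinv hcomm in
theorem rep_eps_comm (s t : S) :
    (ρ s * ρ (star s)) * (ρ t * ρ (star t)) = (ρ t * ρ (star t)) * (ρ s * ρ (star s)) := by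
  have hef : ρ (s * star s) * ρ (t * star t) = ρ (t * star t) * ρ (s * star s) := by
    rw [rep_idem_mul ρ h1 h2 h3 _ _ (s_he s) (s_he t) (s_hee hinv s) (s_hee hinv t) (hcomm s t),
      rep_idem_mul ρ h1 h2 h3 _ _ (s_he t) (s_he s) (s_hee hinv t) (s_hee hinv s) (hcomm t s),
      hcomm s t]
  calc (ρ s * ρ (star s)) * (ρ t * ρ (star t))
      = ρ (t * (star t * s)) * ρ (star (t * (star t * s))) *
          ρ (s * (star s * t)) * ρ (star (s * (star s * t))) *
          ρ (s * star s) * ρ (t * star t) := rep_comm_aux ρ h1 h2 h3 hinv hcomm s t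
    _ = ((ρ (t * (star t * s)) * ρ (star (t * (star t * s)))) *
          (ρ (s * (star s * t)) * ρ (star (s * (star s * t))))) *
          (ρ (s * star s) * ρ (t * star t)) := by simp only [mul_assoc]
    _ = ((ρ (s * (star s * t)) * ρ (star (s * (star s * t)))) *
          (ρ (t * (star t * s)) * ρ (star (t * (star t * s))))) *
          (ρ (t * star t) * ρ (s * star s)) := by
        rw [← rep_epsab_comm ρ h1 h2 h3 hinv hcomm s t, hef]
    _ = ρ (s * (star s * t)) * ρ (star (s * (star s * t))) *
          ρ (t * (star t * s)) * ρ (star (t * (star t * s))) *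
          ρ (t * star t) * ρ (s * star s) := by simp only [mul_assoc]
    _ = (ρ t * ρ (star t)) * (ρ s * ρ (star s)) :=
        (rep_comm_aux ρ h1 h2 h3 hinv hcomm t s).symm

end comm
end RepLemmas


/-- The map `φ_π̃ : A ⋊_{α^π̃} S → B/J`, `Σ a_s δ_s ↦ Σ a_s π̃(s)`, is a
well-defined algebra homomorphism.  Here `B/J` is realized as the quotient of
`B` by the ring congruence generated by `a π s ~ a π t` (`s ≤ t`), `π̃` is the
induced partial representation, `A` is the subalgebra of `B/J` generated by the
`ε̃_s = π̃ s π̃ (s*)`, and `α^π̃` is the associated partial action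
`X_s = ε̃_s A`, `α_s (a) = π̃ s a π̃ (s*)`. -/
theorem phi_hom_of_partialRep
    {S : Type*} [Monoid S] [StarMul S]
    (hinv : ∀ s : S, s * star s * s = s)
    (hcomm : ∀ s t : S, (s * star s) * (t * star t) = (t * star t) * (s * star s))
    {K : Type*} [CommRing K] {B : Type*} [Ring B] [Algebra K B]
    (π : S → B)
    (hπ1 : ∀ s t : S, π (star s) * π s * π t = π (star s) * π (s * t))
    (hπ2 : ∀ s t : S, π s * π t * π (star t) = π (s * t) * π (star t))
    (hπ3 : ∀ s : S, π s * π (star s) * π s = π s)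
    (relJ : B → B → Prop)
    (hrelJ : relJ = fun x y => ∃ (a : B) (s t : S), sle s t ∧ x = a * π s ∧ y = a * π t)
    (πt : S → (ringConGen relJ).Quotient)
    (hπt : ∀ s, πt s = ((π s : B) : (ringConGen relJ).Quotient))
    (Asub : NonUnitalSubalgebra K (ringConGen relJ).Quotient)
    (hAsub : Asub = NonUnitalAlgebra.adjoin K (Set.range fun s => πt s * πt (star s)))
    (P : PartialAction S ↥Asub)
    (hPX : ∀ s : S, (Subtype.val '' P.X s) =
      {x : (ringConGen relJ).Quotient | ∃ b ∈ Asub, x = (πt s * πt (star s)) * b})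
    (hPact : ∀ s : S, ∀ a ∈ P.X (star s),
      ((P.act s a : ↥Asub) : (ringConGen relJ).Quotient) = πt s * (a : (ringConGen relJ).Quotient) * πt (star s)) :
    ∃ φ : P.CP → (ringConGen relJ).Quotient,
      (∀ f : P.L, φ (P.toCP f) =
        ∑ u ∈ f.1.support, ((f.1 u : (ringConGen relJ).Quotient) * πt u)) ∧
      (∀ x y, φ (x + y) = φ x + φ y) ∧
      (∀ x y, φ (x * y) = φ x * φ y) := by
  classical
  have hq1 : ∀ s t : S, πt (star s) * πt s * πt t = πt (star s) * πt (s * t) := by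
    intro s t
    simp only [hπt, ← RingCon.coe_mul]
    exact congrArg _ (hπ1 s t)
  have hq2 : ∀ s t : S, πt s * πt t * πt (star t) = πt (s * t) * πt (star t) := by
    intro s t
    simp only [hπt, ← RingCon.coe_mul]
    exact congrArg _ (hπ2 s t)
  have hq3 : ∀ s : S, πt s * πt (star s) * πt s = πt s := by
    intro s
    simp only [hπt, ← RingCon.coe_mul]
    exact congrArg _ (hπ3 s)
  have hepsq : ∀ s : S, (πt s * πt (star s)) * (πt s * πt (star s)) = πt s * πt (star s) := by
    intro s
    rw [← mul_assoc, hq3 s]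
  have hepscomm := rep_eps_comm πt hq1 hq2 hq3 hinv hcomm
  have hcentral : ∀ (u : S) (c : (ringConGen relJ).Quotient), c ∈ Asub →
      c * (πt u * πt (star u)) = (πt u * πt (star u)) * c := by
    intro u c hc
    rw [hAsub] at hc
    induction hc using NonUnitalAlgebra.adjoin_induction with
    | mem x hx =>
      obtain ⟨w, rfl⟩ := hx
      exact hepscomm w u
    | add x y hx hy ihx ihy => rw [add_mul, mul_add, ihx, ihy]
    | zero => rw [zero_mul, mul_zero]
    | mul x y hx hy ihx ihy => rw [mul_assoc, ihy, ← mul_assoc, ihx, mul_assoc]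
    | smul k x hx ih => rw [smul_mul_assoc, mul_smul_comm, ih]
  have habs : ∀ (s : S) (a : ↥Asub), a ∈ P.X s →
      (πt s * πt (star s)) * (a : (ringConGen relJ).Quotient) = (a : (ringConGen relJ).Quotient) := by
    intro s a ha
    have hmem : (a : (ringConGen relJ).Quotient) ∈ Subtype.val '' P.X s := ⟨a, ha, rfl⟩
    rw [hPX s] at hmem
    obtain ⟨b, _hb, heq⟩ := hmem
    rw [heq, ← mul_assoc, hepsq s]
  have hT : ∀ (s t : S) (a b : ↥Asub), a ∈ P.X s → b ∈ P.X t →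
      ((P.act s (P.act (star s) a * b) : ↥Asub) : (ringConGen relJ).Quotient) * πt (s * t)
        = (a : (ringConGen relJ).Quotient) * πt s *
            ((b : (ringConGen relJ).Quotient) * πt t) := by
    intro s t a b ha hb
    have ha' : a ∈ P.X (star (star s)) := by rwa [star_star]
    have hmem1 : P.act (star s) a ∈ P.X (star s) := P.mem_act (star s) ha'
    have hmem : P.act (star s) a * b ∈ P.X (star s) := P.mul_mem_right (star s) b hmem1
    have hw := hPact s _ hmem
    have hcoe : ((P.act (star s) a * b : ↥Asub) : (ringConGen relJ).Quotient)
        = ((P.act (star s) a : ↥Asub) : (ringConGen relJ).Quotient)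
            * (b : (ringConGen relJ).Quotient) := rfl
    have hact : ((P.act (star s) a : ↥Asub) : (ringConGen relJ).Quotient)
        = πt (star s) * (a : (ringConGen relJ).Quotient) * πt s := by
      have h' := hPact (star s) a ha'
      rwa [star_star] at h'
    have w1 : πt (star s) * πt (s * t) = πt (star s) * (πt s * πt t) := by
      rw [← hq1 s t, mul_assoc]
    have hcB := hcentral (star s) ((b : ↥Asub) : (ringConGen relJ).Quotient) b.2
    rw [star_star] at hcB
    rw [hw, hcoe, hact]
    calc πt s * (πt (star s) * (a : (ringConGen relJ).Quotient) * πt s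
            * (b : (ringConGen relJ).Quotient)) * πt (star s) * πt (s * t)
        = (πt s * πt (star s)) * (a : (ringConGen relJ).Quotient)
            * (πt s * ((b : (ringConGen relJ).Quotient) * (πt (star s) * πt (s * t)))) := by
          simp only [mul_assoc]
      _ = (πt s * πt (star s)) * (a : (ringConGen relJ).Quotient)
            * (πt s * ((b : (ringConGen relJ).Quotient) * (πt (star s) * (πt s * πt t)))) := by
          rw [w1]
      _ = (πt s * πt (star s)) * (a : (ringConGen relJ).Quotient)
            * (πt s * (((b : (ringConGen relJ).Quotient) * (πt (star s) * πt s)) * πt t)) := by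
          simp only [mul_assoc]
      _ = (πt s * πt (star s)) * (a : (ringConGen relJ).Quotient)
            * (πt s * (((πt (star s) * πt s) * (b : (ringConGen relJ).Quotient)) * πt t)) := by
          rw [hcB]
      _ = (πt s * πt (star s)) * (a : (ringConGen relJ).Quotient)
            * ((πt s * πt (star s) * πt s) * ((b : (ringConGen relJ).Quotient) * πt t)) := by
          simp only [mul_assoc]
      _ = (πt s * πt (star s)) * (a : (ringConGen relJ).Quotient)
            * (πt s * ((b : (ringConGen relJ).Quotient) * πt t)) := by rw [hq3 s]
      _ = (a : (ringConGen relJ).Quotient)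
            * (πt s * ((b : (ringConGen relJ).Quotient) * πt t)) := by rw [habs s a ha]
      _ = (a : (ringConGen relJ).Quotient) * πt s
            * ((b : (ringConGen relJ).Quotient) * πt t) := by rw [← mul_assoc]
  have hzero : ∀ u : S, ((0 : ↥Asub) : (ringConGen relJ).Quotient) * πt u = 0 := by
    intro u
    rw [ZeroMemClass.coe_zero, zero_mul]
  have haddf : ∀ (u : S) (x y : ↥Asub),
      ((x + y : ↥Asub) : (ringConGen relJ).Quotient) * πt u
        = (x : (ringConGen relJ).Quotient) * πt u + (y : (ringConGen relJ).Quotient) * πt u := by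
    intro u x y
    rw [AddMemClass.coe_add, add_mul]
  have key_add : ∀ f g : P.L,
      ((f + g).1.sum fun v w => (w : (ringConGen relJ).Quotient) * πt v)
        = (f.1.sum fun v w => (w : (ringConGen relJ).Quotient) * πt v)
          + (g.1.sum fun v w => (w : (ringConGen relJ).Quotient) * πt v) := by
    intro f g
    show ((f.1 + g.1).sum fun v w => (w : (ringConGen relJ).Quotient) * πt v) = _
    exact Finsupp.sum_add_index' hzero (haddf ·)
  have key_mul : ∀ f g : P.L,
      ((f * g).1.sum fun v w => (w : (ringConGen relJ).Quotient) * πt v)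
        = (f.1.sum fun v w => (w : (ringConGen relJ).Quotient) * πt v)
          * (g.1.sum fun v w => (w : (ringConGen relJ).Quotient) * πt v) := by
    intro f g
    show ((f.1.sum fun s a => g.1.sum fun t b =>
        Finsupp.single (s * t) (P.act s (P.act (star s) a * b))).sum
          fun v w => (w : (ringConGen relJ).Quotient) * πt v) = _
    rw [Finsupp.sum_sum_index hzero (haddf ·), Finsupp.sum_mul]
    refine Finsupp.sum_congr fun s hs => ?_
    rw [Finsupp.sum_sum_index hzero (haddf ·), Finsupp.mul_sum]
    refine Finsupp.sum_congr fun t ht => ?_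
    rw [Finsupp.sum_single_index (hzero (s * t))]
    exact hT s t (f.1 s) (g.1 t) (f.2 s) (g.2 t)
  have hsingle : ∀ (u : S) (z : ↥Asub) (h : z ∈ P.X u),
      ((P.del u z h).1.sum fun v w => (w : (ringConGen relJ).Quotient) * πt v)
        = (z : (ringConGen relJ).Quotient) * πt u := by
    intro u z h
    show ((Finsupp.single u z).sum fun v w => (w : (ringConGen relJ).Quotient) * πt v) = _
    exact Finsupp.sum_single_index (hzero u)
  have hφrel : ∀ x y : P.L, P.crel x y →
      (x.1.sum fun v w => (w : (ringConGen relJ).Quotient) * πt v)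
        = (y.1.sum fun v w => (w : (ringConGen relJ).Quotient) * πt v) := by
    rintro x y ⟨r, t, a, hr, ht, hlert, rfl, rfl⟩
    rw [hsingle, hsingle]
    obtain ⟨bb, hbb⟩ := Quot.exists_rep ((a : ↥Asub) : (ringConGen relJ).Quotient)
    have hbb' : ((bb : B) : (ringConGen relJ).Quotient)
        = ((a : ↥Asub) : (ringConGen relJ).Quotient) := hbb
    rw [← hbb', hπt r, hπt t, ← RingCon.coe_mul, ← RingCon.coe_mul, RingCon.eq]
    exact RingConGen.Rel.of _ _ (by rw [hrelJ]; exact ⟨bb, r, t, hlert, rfl, rfl⟩)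
  let D : RingCon P.L :=
    { r := fun x y => (x.1.sum fun v w => (w : (ringConGen relJ).Quotient) * πt v)
            = (y.1.sum fun v w => (w : (ringConGen relJ).Quotient) * πt v)
      iseqv := ⟨fun _ => rfl, Eq.symm, Eq.trans⟩
      mul' := @fun a b c d h h' => by
        show ((a * c).1.sum fun v w => (w : (ringConGen relJ).Quotient) * πt v)
          = ((b * d).1.sum fun v w => (w : (ringConGen relJ).Quotient) * πt v)
        rw [key_mul, key_mul, h, h']
      add' := @fun a b c d h h' => by
        show ((a + c).1.sum fun v w => (w : (ringConGen relJ).Quotient) * πt v)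
          = ((b + d).1.sum fun v w => (w : (ringConGen relJ).Quotient) * πt v)
        rw [key_add, key_add, h, h'] }
  have hle : ringConGen P.crel ≤ D := RingCon.ringConGen_le.mpr hφrel
  let φ : P.CP → (ringConGen relJ).Quotient := fun x => Quotient.liftOn' x
      (fun f : P.L => f.1.sum fun v w => (w : (ringConGen relJ).Quotient) * πt v)
      (fun f g h => hle h)
  have hca : ∀ f g : P.L, ((f : P.CP) + (g : P.CP)) = ((f + g : P.L) : P.CP) :=
    fun f g => (RingCon.coe_add _ f g).symm
  have hcm : ∀ f g : P.L, ((f : P.CP) * (g : P.CP)) = ((f * g : P.L) : P.CP) :=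
    fun f g => (RingCon.coe_mul _ f g).symm
  refine ⟨φ, fun f => rfl, ?_, ?_⟩
  · intro x y
    refine Quotient.inductionOn₂' x y fun f g => ?_
    exact (congrArg φ (hca f g)).trans (key_add f g)
  · intro x y
    refine Quotient.inductionOn₂' x y fun f g => ?_
    exact (congrArg φ (hcm f g)).trans (key_mul f g)
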